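/- In S₈, the permutation λ = (1 5)(2 6)(3 7)(4 8) commutes with both ω₈ = (1 3 2 4)(5 7 6 8) and κ = (1 7)(3 5)(2 8)(4 6), λ does not belong to the subgroup ⟨ω₈, κ⟩, and the subgroup ⟨ω₈, κ, λ⟩ of S₈ has order 16; hence adjoining the local hip–knee symmetry λ preserves the global D₄ symmetry generated by ω₈ and κ. -/

import Mathlib

/-- ω₈ = (1 3 2 4)(5 7 6 8), written 0-indexed on `Fin 8` as (0 2 1 3)(4 6 5 7). -/
def ω₈ : Equiv.Perm (Fin 8) := c[0, 2, 1, 3] * c[4, 6, 5, 7]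

/-- κ = (1 7)(3 5)(2 8)(4 6), written 0-indexed on `Fin 8` as (0 6)(2 4)(1 7)(3 5). -/
def κ : Equiv.Perm (Fin 8) :=
  Equiv.swap 0 6 * Equiv.swap 2 4 * Equiv.swap 1 7 * Equiv.swap 3 5

/-- λ = (1 5)(2 6)(3 7)(4 8), written 0-indexed on `Fin 8` as (0 4)(1 5)(2 6)(3 7). -/
def lam : Equiv.Perm (Fin 8) :=
  Equiv.swap 0 4 * Equiv.swap 1 5 * Equiv.swap 2 6 * Equiv.swap 3 7

/-- The eight elements of the dihedral group generated by ω₈ and κ. -/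
def S8' : Finset (Equiv.Perm (Fin 8)) :=
  {1, ω₈, ω₈^2, ω₈^3, κ, ω₈*κ, ω₈^2*κ, ω₈^3*κ}

/-- The sixteen elements of the group generated by ω₈, κ and lam. -/
def S16 : Finset (Equiv.Perm (Fin 8)) :=
  {1, ω₈, ω₈^2, ω₈^3, κ, ω₈*κ, ω₈^2*κ, ω₈^3*κ,
   lam, lam*ω₈, lam*ω₈^2, lam*ω₈^3, lam*κ, lam*ω₈*κ, lam*ω₈^2*κ, lam*ω₈^3*κ}

set_option maxRecDepth 100000 in
theorem mul_S8' : ∀ a ∈ S8', ∀ b ∈ S8', a * b ∈ S8' := by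
  intro a ha b hb
  simp only [S8', Finset.mem_insert, Finset.mem_singleton] at ha hb
  obtain rfl|rfl|rfl|rfl|rfl|rfl|rfl|rfl := ha <;>
  obtain rfl|rfl|rfl|rfl|rfl|rfl|rfl|rfl := hb <;> decide

set_option maxRecDepth 100000 in
theorem inv_S8' : ∀ a ∈ S8', a⁻¹ ∈ S8' := by
  intro a ha
  simp only [S8', Finset.mem_insert, Finset.mem_singleton] at ha
  obtain rfl|rfl|rfl|rfl|rfl|rfl|rfl|rfl := ha <;> decide

set_option maxRecDepth 100000 in
theorem mul_S16 : ∀ a ∈ S16, ∀ b ∈ S16, a * b ∈ S16 := by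
  intro a ha b hb
  simp only [S16, Finset.mem_insert, Finset.mem_singleton] at ha hb
  obtain rfl|rfl|rfl|rfl|rfl|rfl|rfl|rfl|rfl|rfl|rfl|rfl|rfl|rfl|rfl|rfl := ha <;>
  obtain rfl|rfl|rfl|rfl|rfl|rfl|rfl|rfl|rfl|rfl|rfl|rfl|rfl|rfl|rfl|rfl := hb <;> decide

set_option maxRecDepth 100000 in
theorem inv_S16 : ∀ a ∈ S16, a⁻¹ ∈ S16 := by
  intro a ha
  simp only [S16, Finset.mem_insert, Finset.mem_singleton] at ha
  obtain rfl|rfl|rfl|rfl|rfl|rfl|rfl|rfl|rfl|rfl|rfl|rfl|rfl|rfl|rfl|rfl := ha <;> decide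

set_option maxRecDepth 100000 in
/-- The dihedral subgroup of order 8. -/
def K8 : Subgroup (Equiv.Perm (Fin 8)) where
  carrier := {x | x ∈ S8'}
  one_mem' := by decide
  mul_mem' := fun {a b} ha hb => mul_S8' a ha b hb
  inv_mem' := fun {a} ha => inv_S8' a ha

set_option maxRecDepth 100000 in
/-- The subgroup of order 16. -/
def K16 : Subgroup (Equiv.Perm (Fin 8)) where
  carrier := {x | x ∈ S16}
  one_mem' := by decide
  mul_mem' := fun {a b} ha hb => mul_S16 a ha b hb
  inv_mem' := fun {a} ha => inv_S16 a ha

set_option maxRecDepth 100000 in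
set_option maxHeartbeats 1000000 in
theorem closure16 : Subgroup.closure {ω₈, κ, lam} = K16 := by
  apply le_antisymm
  · rw [Subgroup.closure_le]
    intro x hx
    rcases hx with rfl | rfl | rfl
    · show ω₈ ∈ S16; decide
    · show κ ∈ S16; decide
    · show lam ∈ S16; decide
  · intro x hx
    have hg : ∀ g ∈ ({ω₈, κ, lam} : Set (Equiv.Perm (Fin 8))),
        g ∈ Subgroup.closure {ω₈, κ, lam} := fun g hg => Subgroup.subset_closure hg
    have hω := hg ω₈ (by simp)
    have hκ := hg κ (by simp)
    have hl := hg lam (by simp)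
    have hx' : x ∈ S16 := hx
    simp only [S16, Finset.mem_insert, Finset.mem_singleton] at hx'
    obtain rfl|rfl|rfl|rfl|rfl|rfl|rfl|rfl|rfl|rfl|rfl|rfl|rfl|rfl|rfl|rfl := hx'
    · exact one_mem _
    · exact hω
    · exact pow_mem hω 2
    · exact pow_mem hω 3
    · exact hκ
    · exact mul_mem hω hκ
    · exact mul_mem (pow_mem hω 2) hκ
    · exact mul_mem (pow_mem hω 3) hκ
    · exact hl
    · exact mul_mem hl hω
    · exact mul_mem hl (pow_mem hω 2)
    · exact mul_mem hl (pow_mem hω 3)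
    · exact mul_mem hl hκ
    · exact mul_mem (mul_mem hl hω) hκ
    · exact mul_mem (mul_mem hl (pow_mem hω 2)) hκ
    · exact mul_mem (mul_mem hl (pow_mem hω 3)) hκ

set_option maxRecDepth 100000 in
/-- λ commutes with ω₈ and κ, λ ∉ ⟨ω₈, κ⟩, and ⟨ω₈, κ, λ⟩ has order 16; hence adjoining
the local hip–knee symmetry λ preserves the global D₄ symmetry generated by ω₈ and κ. -/
theorem stmt_11 :
    Commute lam ω₈ ∧ Commute lam κ ∧
    lam ∉ Subgroup.closure {ω₈, κ} ∧
    Nat.card (Subgroup.closure {ω₈, κ, lam} : Subgroup (Equiv.Perm (Fin 8))) = 16 := by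
  refine ⟨by show lam * ω₈ = ω₈ * lam; decide, by show lam * κ = κ * lam; decide, ?_, ?_⟩
  · intro h
    have h8 : Subgroup.closure {ω₈, κ} ≤ K8 := by
      rw [Subgroup.closure_le]
      intro x hx
      rcases hx with rfl | rfl
      · show ω₈ ∈ S8'; decide
      · show κ ∈ S8'; decide
    have hm : lam ∈ S8' := h8 h
    revert hm
    decide
  · rw [closure16]
    have h1 : (K16 : Set (Equiv.Perm (Fin 8))) = ↑S16 := rfl
    calc Nat.card K16 = Nat.card (↑S16 : Set (Equiv.Perm (Fin 8))) := by rw [← h1]; rfl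
      _ = (↑S16 : Set (Equiv.Perm (Fin 8))).ncard := Nat.card_coe_set_eq _
      _ = S16.card := Set.ncard_coe_finset _
      _ = 16 := by decide
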